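/- Let n ≥ 2, let p₁ < p₂ < ⋯ < pₙ < 0 be reals and w₁, …, wₙ > 0. Define φ(x) := Σ_{i=1}^n w_i·x^{p_i−1} for x > 0, let I₁ : (0,∞) → (0,∞) be its inverse, differentiable with I₁′(z) = 1/φ′(I₁(z)) for all z > 0, and let I₂(z) := (z/wₙ)^{1/(pₙ−1)}, so that I₂′(z) = (1/(pₙ−1))·(1/wₙ)^{1/(pₙ−1)}·z^{1/(pₙ−1)−1}. Then for every β ∈ [0,1) with β > 1 + p_{n−1} − pₙ, there exists K > 0 such that for all z > 0: |z·I₁′(z) − z·I₂′(z)| ≤ K·(1 + z^{β/(pₙ−1)}). -/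

import Mathlib

lemma bernoulli_neg_aux {u r : ℝ} (hu : 0 ≤ u) (hr1 : -1 ≤ r) (hr0 : r ≤ 0) :
    1 + r * u ≤ (1 + u) ^ r := by
  have h1u : (0:ℝ) < 1 + u := by linarith
  have h1 : (1 + u) ^ (-r) ≤ 1 + (-r) * u :=
    rpow_one_add_le_one_add_mul_self (by linarith) (by linarith) (by linarith)
  have h2 : (1 + u) ^ r = ((1 + u) ^ (-r))⁻¹ := by
    rw [← Real.rpow_neg h1u.le, neg_neg]
  have hp : (0:ℝ) < (1 + u) ^ (-r) := Real.rpow_pos_of_pos h1u _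
  rcases le_or_gt (1 + r * u) 0 with h | h
  · exact h.trans (Real.rpow_pos_of_pos h1u r).le
  · rw [h2, inv_eq_one_div, le_div_iff₀ hp]
    nlinarith [mul_le_mul_of_nonneg_left h1 h.le, sq_nonneg (r * u)]

set_option maxHeartbeats 4000000 in
/-- Proposition 2.13, inequality (2): with `I₁` the inverse of `φ(x) = Σ wᵢ x^{pᵢ-1}`,
`I₁'(z) = 1/φ'(I₁(z))`, and the CRRA benchmark
`I₂'(z) = (1/(pₙ-1))(1/wₙ)^{1/(pₙ-1)} z^{1/(pₙ-1)-1}`, one has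
`|z I₁'(z) - z I₂'(z)| ≤ K(1 + z^{β/(pₙ-1)})` for any `β ∈ [0,1)` with
`β > 1 + p_{n-1} - pₙ`. -/
theorem linear_sharing_inverse_marginal_derivative_bound
    (n : ℕ) (hn : 2 ≤ n)
    (p : Fin n → ℝ) (hpmono : StrictMono p) (hpneg : ∀ i, p i < 0)
    (w : Fin n → ℝ) (hw : ∀ i, 0 < w i)
    (I₁ I₁' : ℝ → ℝ)
    (hI₁ : ∀ z : ℝ, 0 < z → 0 < I₁ z ∧ (∑ i, w i * I₁ z ^ (p i - 1)) = z)
    (hI₁d : ∀ z : ℝ, 0 < z → HasDerivAt I₁ (I₁' z) z ∧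
      I₁' z = 1 / (∑ i, w i * (p i - 1) * I₁ z ^ (p i - 2)))
    (β : ℝ) (hβ0 : 0 ≤ β) (hβ1 : β < 1)
    (hβ2 : 1 + p ⟨n - 2, by omega⟩ - p ⟨n - 1, by omega⟩ < β) :
    ∃ K : ℝ, 0 < K ∧ ∀ z : ℝ, 0 < z →
      |z * I₁' z -
          z * ((1 / (p ⟨n - 1, by omega⟩ - 1)) *
            (1 / w ⟨n - 1, by omega⟩) ^ (1 / (p ⟨n - 1, by omega⟩ - 1)) *
            z ^ (1 / (p ⟨n - 1, by omega⟩ - 1) - 1))| ≤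
        K * (1 + z ^ (β / (p ⟨n - 1, by omega⟩ - 1))) := by
  have hn1 : n - 1 < n := by omega
  have hn2 : n - 2 < n := by omega
  set N1 : Fin n := ⟨n - 1, hn1⟩ with hN1
  set N2 : Fin n := ⟨n - 2, hn2⟩ with hN2
  set pn := p N1 with hpn
  set pp := p N2 with hpp
  set wn := w N1 with hwn'
  set q := pn - 1 with hq
  set r := 1 / q with hr
  have hwn : 0 < wn := hw N1
  have hpn0 : pn < 0 := hpneg N1
  have hq1 : q < -1 := by rw [hq]; linarith
  have hq0 : q < 0 := by linarith
  have hqne : q ≠ 0 := ne_of_lt hq0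
  have hq2 : 0 < q ^ 2 := by nlinarith
  have hN21 : N2 < N1 := by
    rw [Fin.lt_def]; simp [hN1, hN2]; omega
  have hppn : pp < pn := hpmono hN21
  have hr0 : r < 0 := by rw [hr]; exact div_neg_of_pos_of_neg one_pos hq0
  have hrq : r * q = 1 := by rw [hr]; field_simp
  have hr1 : -1 ≤ r := by nlinarith
  have he : 1 + pp - pn < β := hβ2
  have hple : ∀ i : Fin n, i ≠ N1 → p i ≤ pp := by
    intro i hi
    apply hpmono.monotone
    rw [Fin.le_def]
    simp [hN2]
    have : (i : ℕ) < n := i.isLt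
    have : (i : ℕ) ≠ n - 1 := by
      intro h; apply hi; rw [hN1]; exact Fin.ext h
    omega
  have hpleq : ∀ i : Fin n, p i ≤ pn := by
    intro i
    apply hpmono.monotone
    rw [Fin.le_def]
    simp [hN1]; omega
  -- constants
  set W := ∑ i, w i with hW'
  have hW : 0 < W := Finset.sum_pos (fun i _ => hw i) ⟨N1, Finset.mem_univ _⟩
  set C2 := ∑ i, w i * (1 - p i) with hC2'
  have hC2 : 0 < C2 := by
    apply Finset.sum_pos (fun i _ => ?_) ⟨N1, Finset.mem_univ _⟩
    have := hpneg i; have := hw i; nlinarith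
  set e := 1 + pp - pn with he'
  set z₀ : ℝ := min 1 wn with hz₀'
  have hz₀ : 0 < z₀ := lt_min one_pos hwn
  have hz₀1 : z₀ ≤ 1 := min_le_left _ _
  have hz₀w : z₀ ≤ wn := min_le_right _ _
  set M : ℝ := max 1 ((z₀ / (2 * W)) ^ r) with hM'
  have hM1 : (1:ℝ) ≤ M := le_max_left _ _
  have hM2 : (z₀ / (2 * W)) ^ r ≤ M := le_max_right _ _
  set C4 := ((-q) * W + C2) / (q ^ 2 * wn) with hC4'
  have hnum0 : 0 < (-q) * W + C2 := by nlinarith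
  have hC4 : 0 < C4 := div_pos hnum0 (by positivity)
  set C5 := W / wn with hC5'
  have hC5 : 0 < C5 := div_pos hW hwn
  set C6 := 1 + (W⁻¹) ^ (e / q) with hC6'
  have hC6 : (1:ℝ) ≤ C6 := by
    have h : (0:ℝ) ≤ (W⁻¹) ^ (e / q) := Real.rpow_nonneg (by positivity) _
    rw [hC6']; linarith
  set C7 := M + (z₀ / wn) ^ r with hC7'
  have hC7 : 0 < C7 := by
    have h : (0:ℝ) ≤ (z₀ / wn) ^ r := Real.rpow_nonneg (by positivity) _
    rw [hC7']; linarith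
  have hKaux : 0 < (C4 + C5) * C6 := mul_pos (by linarith) (by linarith)
  clear_value N1 N2 pn pp wn q r W C2 e z₀ M C4 C5 C6 C7
  refine ⟨C7 + (C4 + C5) * C6 + 1, by linarith, ?_⟩
  set K := C7 + (C4 + C5) * C6 + 1 with hK'
  clear_value K
  have hK0 : 0 < K := by rw [hK']; linarith
  intro z hz
  obtain ⟨hx, hsum⟩ := hI₁ z hz
  obtain ⟨-, hd⟩ := hI₁d z hz
  set x := I₁ z with hxdef
  set B := ∑ i, w i * (p i - 1) * x ^ (p i - 2) with hBdef
  clear_value x B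
  rw [hd]
  clear hd hI₁ hI₁d hpmono hxdef hβ1
  have hxne : x ≠ 0 := ne_of_gt hx
  have hx0 : (0:ℝ) ≤ x := hx.le
  have ht0 : 0 ≤ z ^ (β / q) := Real.rpow_nonneg hz.le _
  -- basic sum estimates
  have hBq : q ^ 2 * wn * x ^ (q - 1) ≤ q * B := by
    have h1 : q * B = ∑ i, q * (w i * (p i - 1) * x ^ (p i - 2)) := by
      rw [hBdef, Finset.mul_sum]
    have hexpN : x ^ (p N1 - 2) = x ^ (q - 1) := by
      congr 1; rw [hq, hpn]; ring
    have h2 : q ^ 2 * wn * x ^ (q - 1) = q * (w N1 * (p N1 - 1) * x ^ (p N1 - 2)) := by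
      rw [hexpN, hwn', hq, hpn]; ring
    rw [h1, h2]
    apply Finset.single_le_sum (f := fun i => q * (w i * (p i - 1) * x ^ (p i - 2)))
      (fun i _ => ?_) (Finset.mem_univ N1)
    have h3 := mul_pos (mul_pos (show (0:ℝ) < -q by linarith only [hq0])
      (show (0:ℝ) < 1 - p i by linarith only [hpneg i]))
      (mul_pos (hw i) (Real.rpow_pos_of_pos hx (p i - 2)))
    have h4 : q * (w i * (p i - 1) * x ^ (p i - 2))
        = -q * (1 - p i) * (w i * x ^ (p i - 2)) := by ring
    rw [h4]
    exact h3.le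
  have hqB0 : 0 < q * B :=
    lt_of_lt_of_le (mul_pos (mul_pos hq2 hwn) (Real.rpow_pos_of_pos hx _)) hBq
  have hB0 : B < 0 := by
    rcases mul_pos_iff.mp hqB0 with ⟨h, _⟩ | ⟨_, h⟩
    · exact absurd h (not_lt.mpr hq0.le)
    · exact h
  have hBne : B ≠ 0 := ne_of_lt hB0
  have hzwlow : wn * x ^ q ≤ z := by
    rw [← hsum]
    have h2 : wn * x ^ q = w N1 * x ^ (p N1 - 1) := by
      have : x ^ (p N1 - 1) = x ^ q := by congr 1; rw [hq, hpn]
      rw [this, hwn']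
    rw [h2]
    exact Finset.single_le_sum (f := fun i => w i * x ^ (p i - 1))
      (fun i _ => le_of_lt (mul_pos (hw i) (Real.rpow_pos_of_pos hx _)))
      (Finset.mem_univ N1)
  have hsum2 : x * B = ∑ i, w i * (p i - 1) * x ^ (p i - 1) := by
    rw [hBdef, Finset.mul_sum]
    apply Finset.sum_congr rfl
    intro i _
    have h := Real.rpow_add_one hxne (p i - 2)
    rw [show p i - 2 + 1 = p i - 1 by ring] at h
    rw [h]; ring
  have hT1x : |z * (1 / B)| ≤ x := by
    have hxB : z ≤ x * (-B) := by
      rw [← hsum, mul_neg, hsum2, ← Finset.sum_neg_distrib]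
      apply Finset.sum_le_sum
      intro i _
      have h1 := hpneg i
      have h2 := hw i
      have h3 := Real.rpow_pos_of_pos hx (p i - 1)
      nlinarith only [h1, mul_pos h2 h3]
    have hBneg' : 0 < -B := by linarith only [hB0]
    have h4 : z * (1 / B) = -(z / (-B)) := by field_simp
    rw [h4, abs_neg, abs_of_nonneg (div_nonneg hz.le hBneg'.le), div_le_iff₀ hBneg']
    exact hxB
  have hT2eq : z * (r * (1 / wn) ^ r * z ^ (r - 1)) = (z / wn) ^ r / q := by
    have hzr : z ^ (r - 1) * z = z ^ r := by
      have h := Real.rpow_add_one (ne_of_gt hz) (r - 1)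
      rw [show r - 1 + 1 = r by ring] at h
      exact h.symm
    have h5 : (z / wn) ^ r = z ^ r / wn ^ r := Real.div_rpow hz.le hwn.le r
    have h6 : (1 / wn) ^ r = 1 / wn ^ r := by
      rw [one_div, Real.inv_rpow hwn.le, one_div]
    have hwnr : (0:ℝ) < wn ^ r := Real.rpow_pos_of_pos hwn r
    rw [h5, h6, ← hzr, eq_div_iff hqne]
    linear_combination ((z * z ^ (r - 1)) / wn ^ r) * hrq
  set y := (z / wn) ^ r with hy'
  clear_value y
  have hy0 : 0 < y := by
    rw [hy']; exact Real.rpow_pos_of_pos (div_pos hz hwn) _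
  rcases le_or_gt z₀ z with hge | hlt
  · -- bounded region
    have hxM : x ≤ M := by
      by_contra hcon
      push_neg at hcon
      have hx1 : 1 ≤ x := le_trans hM1 hcon.le
      have hzup : z ≤ W * x ^ q := by
        rw [← hsum, hW', Finset.sum_mul]
        apply Finset.sum_le_sum
        intro i _
        have h1 := Real.rpow_le_rpow_of_exponent_le hx1
          (show p i - 1 ≤ q by rw [hq]; linarith [hpleq i])
        nlinarith only [h1, hw i]
      have hM₀ : (0:ℝ) < z₀ / (2 * W) := div_pos hz₀ (by linarith only [hW])
      have h1 : x ^ q ≤ ((z₀ / (2 * W)) ^ r) ^ q :=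
        Real.rpow_le_rpow_of_nonpos (Real.rpow_pos_of_pos hM₀ r)
          (le_trans hM2 hcon.le) hq0.le
      have h2 : ((z₀ / (2 * W)) ^ r) ^ q = z₀ / (2 * W) := by
        rw [← Real.rpow_mul hM₀.le, hrq, Real.rpow_one]
      have h3 : W * x ^ q ≤ W * (z₀ / (2 * W)) := by
        apply mul_le_mul_of_nonneg_left _ hW.le
        rw [← h2]; exact h1
      have h4 : W * (z₀ / (2 * W)) = z₀ / 2 := by field_simp
      linarith only [hzup, h3, h4, hz₀, hge]
    have hT2b : |y / q| ≤ (z₀ / wn) ^ r := by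
      have hyb : y ≤ (z₀ / wn) ^ r := by
        rw [hy']
        apply Real.rpow_le_rpow_of_nonpos (div_pos hz₀ hwn) _ hr0.le
        gcongr
      rw [abs_div, abs_of_pos hy0, abs_of_neg hq0]
      calc y / (-q) ≤ y := div_le_self hy0.le (by linarith only [hq1])
        _ ≤ _ := hyb
    calc |z * (1 / B) - z * (r * (1 / wn) ^ r * z ^ (r - 1))|
        ≤ |z * (1 / B)| + |z * (r * (1 / wn) ^ r * z ^ (r - 1))| := abs_sub _ _
      _ ≤ M + (z₀ / wn) ^ r := by
          rw [hT2eq]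
          exact add_le_add (le_trans hT1x hxM) hT2b
      _ ≤ K * (1 + z ^ (β / q)) := by
          rw [hK', hC7']
          linarith only [mul_nonneg (show (0:ℝ) ≤ M + (z₀ / wn) ^ r + (C4 + C5) * C6 + 1
              by linarith only [hC7, hC7', hKaux]) ht0,
            hKaux, ht0, hC7, hC7']
  · -- main region
    have hz1 : z ≤ 1 := le_trans hlt.le hz₀1
    have hx1 : 1 ≤ x := by
      by_contra hcon
      push_neg at hcon
      have h1 : 1 < x ^ q := Real.one_lt_rpow_of_pos_of_lt_one_of_neg hx hcon hq0
      nlinarith only [hzwlow, h1, hwn, hlt, hz₀w]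
    have hzup : z ≤ W * x ^ q := by
      rw [← hsum, hW', Finset.sum_mul]
      apply Finset.sum_le_sum
      intro i _
      have h1 := Real.rpow_le_rpow_of_exponent_le hx1
        (show p i - 1 ≤ q by rw [hq]; linarith [hpleq i])
      nlinarith only [h1, hw i]
    set S := ∑ i ∈ Finset.univ.erase N1, w i * x ^ (p i - 1) with hSdef
    clear_value S
    have hSz : wn * x ^ q + S = z := by
      rw [← hsum, hSdef]
      have h2 : wn * x ^ q = w N1 * x ^ (p N1 - 1) := by
        have : x ^ (p N1 - 1) = x ^ q := by congr 1; rw [hq, hpn]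
        rw [this, hwn']
      rw [h2]
      exact Finset.add_sum_erase _ (fun i => w i * x ^ (p i - 1)) (Finset.mem_univ N1)
    have hS0 : 0 ≤ S := by
      rw [hSdef]
      exact Finset.sum_nonneg fun i _ => le_of_lt (mul_pos (hw i) (Real.rpow_pos_of_pos hx _))
    have hSb : S ≤ W * x ^ (pp - 1) := by
      calc S = ∑ i ∈ Finset.univ.erase N1, w i * x ^ (p i - 1) := hSdef
        _ ≤ ∑ i ∈ Finset.univ.erase N1, w i * x ^ (pp - 1) := by
            apply Finset.sum_le_sum
            intro i hi
            have h1 := Real.rpow_le_rpow_of_exponent_le hx1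
              (show p i - 1 ≤ pp - 1 by linarith [hple i (Finset.ne_of_mem_erase hi)])
            nlinarith only [h1, hw i]
        _ ≤ ∑ i, w i * x ^ (pp - 1) := by
            apply Finset.sum_le_sum_of_subset_of_nonneg (Finset.subset_univ _)
            intro i _ _
            exact mul_nonneg (hw i).le (Real.rpow_nonneg hx0 _)
        _ = W * x ^ (pp - 1) := by rw [hW', Finset.sum_mul]
    set R := B - wn * q * x ^ (q - 1) with hRdef
    clear_value R
    have hRsum : R = ∑ i ∈ Finset.univ.erase N1, w i * (p i - 1) * x ^ (p i - 2) := by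
      rw [hRdef, hBdef]
      have hexpN : x ^ (p N1 - 2) = x ^ (q - 1) := by
        congr 1; rw [hq, hpn]; ring
      have h2 : wn * q * x ^ (q - 1) = w N1 * (p N1 - 1) * x ^ (p N1 - 2) := by
        rw [hexpN, hwn', hq, hpn]
      rw [h2, ← Finset.add_sum_erase _ (fun i => w i * (p i - 1) * x ^ (p i - 2))
        (Finset.mem_univ N1)]
      ring
    have hRb : |R| ≤ C2 * x ^ (pp - 2) := by
      calc |R| ≤ ∑ i ∈ Finset.univ.erase N1, |w i * (p i - 1) * x ^ (p i - 2)| := by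
            rw [hRsum]; exact Finset.abs_sum_le_sum_abs _ _
        _ ≤ ∑ i ∈ Finset.univ.erase N1, w i * (1 - p i) * x ^ (pp - 2) := by
            apply Finset.sum_le_sum
            intro i hi
            rw [abs_mul, abs_mul, abs_of_nonneg (hw i).le,
              abs_of_nonpos (show p i - 1 ≤ 0 by linarith [hpneg i]),
              abs_of_nonneg (Real.rpow_nonneg hx0 _)]
            have h1 := Real.rpow_le_rpow_of_exponent_le hx1
              (show p i - 2 ≤ pp - 2 by linarith [hple i (Finset.ne_of_mem_erase hi)])
            have h2 := hpneg i
            have h3 := hw i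
            nlinarith only [h1, mul_pos h3 (show (0:ℝ) < 1 - p i by linarith only [h2])]
        _ ≤ ∑ i, w i * (1 - p i) * x ^ (pp - 2) := by
            apply Finset.sum_le_sum_of_subset_of_nonneg (Finset.subset_univ _)
            intro i _ _
            exact mul_nonneg (mul_nonneg (hw i).le
              (by linarith only [hpneg i])) (Real.rpow_nonneg hx0 _)
        _ = C2 * x ^ (pp - 2) := by rw [hC2', Finset.sum_mul]
    have hxxq : x ^ q = x ^ (q - 1) * x := by
      have h := Real.rpow_add_one hxne (q - 1)
      rw [show q - 1 + 1 = q by ring] at h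
      exact h
    have hmain1 : |z * (1 / B) - x / q| ≤ C4 * x ^ e := by
      have heq : z * (1 / B) - x / q = (q * z - x * B) / (q * B) := by
        field_simp
      have h1 : q * z - x * B = q * S - x * R := by
        rw [hRdef, ← hSz, hxxq]; ring
      have hnum : |q * z - x * B| ≤ ((-q) * W + C2) * x ^ (pp - 1) := by
        rw [h1]
        have hxx2 : x ^ (pp - 1) = x ^ (pp - 2) * x := by
          have h := Real.rpow_add_one hxne (pp - 2)
          rw [show pp - 2 + 1 = pp - 1 by ring] at h
          exact h
        calc |q * S - x * R| ≤ |q * S| + |x * R| := abs_sub _ _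
          _ = (-q) * S + x * |R| := by
              rw [abs_mul, abs_mul, abs_of_neg hq0, abs_of_nonneg hS0, abs_of_nonneg hx0]
          _ ≤ (-q) * (W * x ^ (pp - 1)) + x * (C2 * x ^ (pp - 2)) := by
              gcongr
              linarith only [hq0]
          _ = ((-q) * W + C2) * x ^ (pp - 1) := by rw [hxx2]; ring
      calc |z * (1 / B) - x / q| = |q * z - x * B| / (q * B) := by
            rw [heq, abs_div, abs_of_pos hqB0]
        _ ≤ (((-q) * W + C2) * x ^ (pp - 1)) / (q ^ 2 * wn * x ^ (q - 1)) :=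
            div_le_div₀ (mul_nonneg hnum0.le (Real.rpow_nonneg hx0 _)) hnum
              (mul_pos (mul_pos hq2 hwn) (Real.rpow_pos_of_pos hx _)) hBq
        _ = C4 * x ^ e := by
            rw [hC4', mul_div_mul_comm, ← Real.rpow_sub hx]
            congr 2
            rw [he', hq]; ring
    have hmain2 : |y / q - x / q| ≤ C5 * x ^ e := by
      set u := z / (wn * x ^ q) - 1 with hu'
      clear_value u
      have hwxq : 0 < wn * x ^ q := mul_pos hwn (Real.rpow_pos_of_pos hx _)
      have hu0 : 0 ≤ u := by
        rw [hu']
        have h1 : 1 ≤ z / (wn * x ^ q) := (one_le_div hwxq).mpr hzwlow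
        linarith only [h1]
      have hu2 : u = S / (wn * x ^ q) := by
        rw [hu', ← hSz]; field_simp; ring
      have huB : u ≤ (W / wn) * x ^ (pp - 1 - q) := by
        rw [hu2]
        calc S / (wn * x ^ q) ≤ (W * x ^ (pp - 1)) / (wn * x ^ q) := by gcongr
          _ = (W / wn) * x ^ (pp - 1 - q) := by
              rw [mul_div_mul_comm, ← Real.rpow_sub hx]
      have hyx : y = x * (1 + u) ^ r := by
        have h1 : z / wn = x ^ q * (1 + u) := by
          rw [hu']; field_simp; ring
        rw [hy', h1, Real.mul_rpow (Real.rpow_nonneg hx0 _) (by linarith only [hu0]),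
          ← Real.rpow_mul hx0, show q * r = 1 by rw [mul_comm]; exact hrq, Real.rpow_one]
      have hber : 1 + r * u ≤ (1 + u) ^ r := bernoulli_neg_aux hu0 hr1 hr0.le
      have hle1 : (1 + u) ^ r ≤ 1 :=
        Real.rpow_le_one_of_one_le_of_nonpos (by linarith only [hu0]) hr0.le
      have habs : |y - x| ≤ x * ((-r) * u) := by
        rw [hyx, abs_of_nonpos (by nlinarith only [hle1, hx0])]
        linarith only [mul_le_mul_of_nonneg_left
          (show 1 - (1 + u) ^ r ≤ (-r) * u by linarith only [hber]) hx0]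
      have hxxe : x * x ^ (pp - 1 - q) = x ^ e := by
        have h := Real.rpow_add_one hxne (pp - 1 - q)
        rw [show pp - 1 - q + 1 = e by rw [he', hq]; ring] at h
        rw [h]; ring
      have habs2 : |y - x| ≤ C5 * x ^ e := by
        calc |y - x| ≤ x * ((-r) * u) := habs
          _ ≤ x * (1 * ((W / wn) * x ^ (pp - 1 - q))) := by
              apply mul_le_mul_of_nonneg_left _ hx0
              apply mul_le_mul (by linarith only [hr1]) huB hu0 (by norm_num)
          _ = C5 * x ^ e := by rw [hC5', ← hxxe]; ring
      calc |y / q - x / q| = |y - x| / (-q) := by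
            rw [div_sub_div_same, abs_div, abs_of_neg hq0]
        _ ≤ |y - x| := div_le_self (abs_nonneg _) (by linarith only [hq1])
        _ ≤ C5 * x ^ e := habs2
    have hβq : β / q ≤ 0 := div_nonpos_of_nonneg_of_nonpos hβ0 hq0.le
    have hzb1 : 1 ≤ z ^ (β / q) :=
      Real.one_le_rpow_of_pos_of_le_one_of_nonpos hz hz1 hβq
    have hmain3 : x ^ e ≤ C6 * z ^ (β / q) := by
      rcases le_or_gt e 0 with he0 | he0
      · have h1 : x ^ e ≤ 1 := Real.rpow_le_one_of_one_le_of_nonpos hx1 he0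
        nlinarith only [h1, hzb1, hC6]
      · have hzW : 0 < z / W := div_pos hz hW
        have h1 : z / W ≤ x ^ q := by
          rw [div_le_iff₀ hW]
          linarith only [hzup]
        have h2 : x ≤ (z / W) ^ r := by
          have h3 := Real.rpow_le_rpow_of_nonpos hzW h1 hr0.le
          rwa [← Real.rpow_mul hx0, show q * r = 1 by rw [mul_comm]; exact hrq,
            Real.rpow_one] at h3
        have h4 : x ^ e ≤ ((z / W) ^ r) ^ e := Real.rpow_le_rpow hx0 h2 he0.le
        have h5 : ((z / W) ^ r) ^ e = (z / W) ^ (e / q) := by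
          rw [← Real.rpow_mul hzW.le, show r * e = e / q by rw [hr]; ring]
        have h6 : (z / W) ^ (e / q) = z ^ (e / q) * (W⁻¹) ^ (e / q) := by
          rw [div_eq_mul_inv, Real.mul_rpow hz.le (inv_nonneg.mpr hW.le)]
        have h7 : z ^ (e / q) ≤ z ^ (β / q) := by
          apply Real.rpow_le_rpow_of_exponent_ge hz hz1
          rw [div_eq_mul_inv, div_eq_mul_inv]
          exact mul_le_mul_of_nonpos_right he.le (inv_nonpos.mpr hq0.le)
        have h8 : (0:ℝ) ≤ (W⁻¹) ^ (e / q) := Real.rpow_nonneg (by positivity) _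
        calc x ^ e ≤ ((z / W) ^ r) ^ e := h4
          _ = z ^ (e / q) * (W⁻¹) ^ (e / q) := by rw [h5, h6]
          _ ≤ z ^ (β / q) * (W⁻¹) ^ (e / q) := mul_le_mul_of_nonneg_right h7 h8
          _ ≤ C6 * z ^ (β / q) := by rw [hC6']; linarith only [ht0]
    calc |z * (1 / B) - z * (r * (1 / wn) ^ r * z ^ (r - 1))|
        = |(z * (1 / B) - x / q) - (y / q - x / q)| := by
          rw [hT2eq]; ring_nf
      _ ≤ |z * (1 / B) - x / q| + |y / q - x / q| := abs_sub _ _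
      _ ≤ C4 * x ^ e + C5 * x ^ e := add_le_add hmain1 hmain2
      _ = (C4 + C5) * x ^ e := by ring
      _ ≤ (C4 + C5) * (C6 * z ^ (β / q)) := by
          apply mul_le_mul_of_nonneg_left hmain3 (by linarith only [hC4, hC5])
      _ ≤ K * (1 + z ^ (β / q)) := by
          rw [hK']
          linarith only [mul_nonneg (show (0:ℝ) ≤ C7 + 1 by linarith only [hC7]) ht0,
            hC7, hKaux]
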